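/- The variance of the number of cycles of a uniformly random permutation of {1, …, n} equals ∑_{i=1}^{n} (i−1)/i². -/

import Mathlib

open Equiv Equiv.Perm Finset

section aux

variable {α : Type*} [DecidableEq α] [Fintype α]

set_option linter.unusedSectionVars false

theorem isCycle_swap_mul_of_isCycle' {c : Perm α} (hc : c.IsCycle) {a b : α}
    (ha : c a = a) (hb : c b ≠ b) : ((swap a b) * c).IsCycle := by
  have hab : a ≠ b := by rintro rfl; exact hb ha
  set s : Perm α := swap a b * c with hs
  have hsa : s a = b := by simp [hs, Perm.mul_apply, ha]
  have key : ∀ k : ℕ, s.SameCycle a ((c ^ k) b) := by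
    intro k
    induction k with
    | zero => exact ⟨1, by simpa using hsa⟩
    | succ k ih =>
      by_cases hk : (c ^ (k+1)) b = b
      · rw [hk]; exact ⟨1, by simpa using hsa⟩
      · have hka : (c ^ k) b ≠ a := by
          intro h
          have : (c ^ k) a = a := pow_apply_eq_self_of_apply_eq_self ha k
          exact hab ((c ^ k).injective (h.trans this.symm)).symm
        have hk1a : (c ^ (k+1)) b ≠ a := by
          intro h
          have : (c ^ (k+1)) a = a := pow_apply_eq_self_of_apply_eq_self ha (k+1)
          exact hab (((c ^ (k+1)).injective (h.trans this.symm))).symm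
        have hstep : s ((c ^ k) b) = (c ^ (k+1)) b := by
          have : c ((c ^ k) b) = (c ^ (k+1)) b := by
            rw [pow_succ', Perm.mul_apply]
          rw [hs, Perm.mul_apply, this, swap_apply_of_ne_of_ne hk1a hk]
        exact ih.trans ⟨1, by simpa using hstep⟩
  refine ⟨a, by simp [hsa, hab.symm] , ?_⟩
  intro y hy
  by_cases hya : y = a
  · rw [hya]
  · have hcy : c y ≠ y := by
      intro h
      apply hy
      rw [hs, Perm.mul_apply, h]
      rcases eq_or_ne y b with rfl | hyb
      · exact absurd h hb
      · exact swap_apply_of_ne_of_ne hya hyb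
    obtain ⟨k, hk⟩ := hc.exists_pow_eq hb hcy
    rw [← hk]; exact key k

theorem swap_mul_fixed_iff' {f : Perm α} {a b : α} (ha : f a = a) (hab : a ≠ b) (x : α) :
    (swap a b * f) x = x ↔ f x = x ∧ x ≠ a ∧ x ≠ b := by
  constructor
  · intro h
    rw [Perm.mul_apply] at h
    rcases eq_or_ne (f x) a with hfa | hfa
    · exfalso
      rw [hfa, swap_apply_left] at h
      subst h
      exact hab (f.injective (hfa.trans ha.symm)).symm
    rcases eq_or_ne (f x) b with hfb | hfb
    · exfalso
      rw [hfb, swap_apply_right] at h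
      subst h
      exact hab (hfb.symm.trans ha).symm
    · rw [swap_apply_of_ne_of_ne hfa hfb] at h
      refine ⟨h, ?_, ?_⟩ <;> rintro rfl
      · exact hfa h
      · exact hfb h
  · rintro ⟨hfx, hxa, hxb⟩
    rw [Perm.mul_apply, hfx, swap_apply_of_ne_of_ne hxa hxb]

theorem card_cycleType_swap_mul' {f : Perm α} {a b : α} (ha : f a = a) (hab : a ≠ b) :
    Multiset.card (swap a b * f).cycleType + (if f b = b then 0 else 1)
      = Multiset.card f.cycleType + 1 := by
  by_cases hb : f b = b
  · have hdisj : (swap a b).Disjoint f := by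
      intro x
      rcases eq_or_ne x a with rfl | hxa
      · exact Or.inr ha
      rcases eq_or_ne x b with rfl | hxb
      · exact Or.inr hb
      · exact Or.inl (swap_apply_of_ne_of_ne hxa hxb)
    rw [if_pos hb, Perm.Disjoint.cycleType_mul hdisj, (isCycle_swap hab).cycleType]
    simp [add_comm]
  · set c : Perm α := f.cycleOf b with hcdef
    have hcmem : c ∈ f.cycleFactorsFinset :=
      cycleOf_mem_cycleFactorsFinset_iff.mpr (mem_support.mpr hb)
    have hc : c.IsCycle := isCycle_cycleOf f hb
    have hcb : c b = f b := cycleOf_apply_self f b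
    have hcb' : c b ≠ b := by rw [hcb]; exact hb
    have hca : c a = a := by
      rw [hcdef, cycleOf_apply]; split <;> simp [ha]
    set g : Perm α := f * c⁻¹ with hgdef
    have hdisj : g.Disjoint c := disjoint_mul_inv_of_mem_cycleFactorsFinset hcmem
    have hfgc : f = g * c := by rw [hgdef]; group
    have hga : g a = a := by
      have hca' : c⁻¹ a = a := by
        rw [Equiv.Perm.inv_eq_iff_eq, hca]
      rw [hgdef, Perm.mul_apply, hca', ha]
    have hgb : g b = b := by
      rcases hdisj b with h | h
      · exact h
      · exact absurd h hcb'
    have hkey : swap a b * f = (swap a b * c) * g := by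
      rw [hfgc, (hdisj.commute).eq]; group
    have hc' : ((swap a b) * c).IsCycle := isCycle_swap_mul_of_isCycle' hc hca hcb'
    have hdisj' : ((swap a b) * c).Disjoint g := by
      intro x
      rcases eq_or_ne x a with rfl | hxa
      · right; exact hga
      rcases eq_or_ne x b with rfl | hxb
      · right; exact hgb
      rcases hdisj x with h | h
      · right; exact h
      · left; rw [Perm.mul_apply, h, swap_apply_of_ne_of_ne hxa hxb]
    rw [if_neg hb, hkey, Perm.Disjoint.cycleType_mul hdisj', hc'.cycleType]
    have : f.cycleType = g.cycleType + c.cycleType := by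
      rw [hfgc, Perm.Disjoint.cycleType_mul hdisj]
    rw [this]
    simp [hc.cycleType, add_comm]

/-- number of cycles, counting fixed points as cycles -/
def xi (s : Perm α) : ℕ :=
  Multiset.card s.cycleType + (univ.filter fun x => s x = x).card

theorem xi_swap_mul {f : Perm α} {a b : α} (ha : f a = a) (hab : a ≠ b) :
    xi (swap a b * f) + 1 = xi f := by
  have hfilter : (univ.filter fun x => (swap a b * f) x = x)
      = (univ.filter fun x => f x = x) \ {a, b} := by
    ext x
    simp only [mem_filter, mem_univ, true_and, mem_sdiff, mem_insert, mem_singleton,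
      swap_mul_fixed_iff' ha hab x, not_or]
  have haF : a ∈ univ.filter fun x => f x = x := by simp [ha]
  have hct := card_cycleType_swap_mul' ha hab
  by_cases hb : f b = b
  · have hsub : ({a, b} : Finset α) ⊆ univ.filter fun x => f x = x := by
      intro x hx
      simp only [mem_insert, mem_singleton] at hx
      rcases hx with rfl | rfl <;> simp [ha, hb]
    have hcard2 : ({a, b} : Finset α).card = 2 := by
      rw [card_insert_of_notMem (by simpa using hab), card_singleton]
    have hsd := Finset.card_sdiff_add_card_eq_card hsub
    rw [if_pos hb] at hct
    unfold xi
    rw [hfilter]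
    omega
  · have hfilter2 : (univ.filter fun x => f x = x) \ {a, b}
        = (univ.filter fun x => f x = x) \ {a} := by
      ext x
      simp only [mem_sdiff, mem_filter, mem_univ, true_and, mem_insert, mem_singleton, not_or]
      constructor
      · tauto
      · rintro ⟨hfx, hxa⟩
        refine ⟨hfx, hxa, ?_⟩
        rintro rfl; exact hb hfx
    have hsub : ({a} : Finset α) ⊆ univ.filter fun x => f x = x := by
      simpa using haF
    have hsd := Finset.card_sdiff_add_card_eq_card hsub
    rw [if_neg hb] at hct
    unfold xi
    rw [hfilter, hfilter2]
    simp only [card_singleton] at hsd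
    omega

end aux

theorem decomposeFin_zero_eq_extendDomain {n : ℕ} (e : Perm (Fin n)) :
    Equiv.Perm.decomposeFin.symm (0, e)
      = e.extendDomain (finSuccAboveEquiv (0 : Fin (n+1))) := by
  ext x
  refine Fin.cases ?_ ?_ x
  · rw [Equiv.Perm.decomposeFin_symm_apply_zero]
    rw [Perm.extendDomain_apply_not_subtype]
    simp
  · intro i
    rw [Equiv.Perm.decomposeFin_symm_apply_succ]
    have h1 : ((finSuccAboveEquiv (0 : Fin (n+1))) i : Fin (n+1)) = i.succ := by
      simp [finSuccAboveEquiv_apply]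
    have h2 := Perm.extendDomain_apply_image e (finSuccAboveEquiv (0 : Fin (n+1))) i
    rw [h1] at h2
    rw [h2, swap_self]
    simp [finSuccAboveEquiv_apply]

theorem xi_decomposeFin_zero {n : ℕ} (e : Perm (Fin n)) :
    xi (Equiv.Perm.decomposeFin.symm (0, e)) = xi e + 1 := by
  set f := Equiv.Perm.decomposeFin.symm (0, e) with hf
  have hct : f.cycleType = e.cycleType := by
    rw [hf, decomposeFin_zero_eq_extendDomain]
    exact Equiv.Perm.cycleType_extendDomain _
  have hfix : (univ.filter fun x => f x = x)
      = Finset.cons 0 ((univ.filter fun x => e x = x).map (Fin.succEmb n))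
        (by simp [Fin.succ_ne_zero]) := by
    ext y
    refine Fin.cases ?_ ?_ y
    · simp [hf]
    · intro i
      simp only [mem_filter, mem_univ, true_and, Finset.mem_cons, Finset.mem_map]
      constructor
      · intro h
        right
        refine ⟨i, ?_, rfl⟩
        rw [hf, Equiv.Perm.decomposeFin_symm_apply_succ, swap_self] at h
        simp only [Equiv.refl_apply, Perm.coe_one, Perm.one_apply, id_eq] at h
        simpa using Fin.succ_injective _ h
      · rintro (h | ⟨j, hj, hji⟩)
        · exact absurd h.symm (Fin.succ_ne_zero i).symm
        · have hji' : j = i := Fin.succ_injective _ hji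
          subst hji'
          rw [hf, Equiv.Perm.decomposeFin_symm_apply_succ, swap_self]
          simp [hj]
  unfold xi
  rw [hct, hfix, Finset.card_cons, Finset.card_map]
  ring

theorem xi_decomposeFin {n : ℕ} (p : Fin (n+1)) (e : Perm (Fin n)) :
    xi (Equiv.Perm.decomposeFin.symm (p, e)) = xi e + (if p = 0 then 1 else 0) := by
  rcases eq_or_ne p 0 with rfl | hp
  · rw [if_pos rfl, xi_decomposeFin_zero]
  · rw [if_neg hp, add_zero]
    have hfact : Equiv.Perm.decomposeFin.symm (p, e)
        = swap 0 p * Equiv.Perm.decomposeFin.symm (0, e) := by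
      ext x
      refine Fin.cases ?_ ?_ x
      · rw [Equiv.Perm.decomposeFin_symm_apply_zero, Perm.mul_apply,
          Equiv.Perm.decomposeFin_symm_apply_zero, swap_apply_left]
      · intro i
        rw [Equiv.Perm.decomposeFin_symm_apply_succ, Perm.mul_apply,
          Equiv.Perm.decomposeFin_symm_apply_succ, swap_self]
        simp
    have h0 : Equiv.Perm.decomposeFin.symm (0, e) 0 = 0 :=
      Equiv.Perm.decomposeFin_symm_apply_zero 0 e
    have := xi_swap_mul h0 hp.symm
    rw [xi_decomposeFin_zero] at this
    rw [hfact]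
    omega

theorem xi_sum_rec {n : ℕ} (F : ℕ → ℝ) :
    ∑ s : Perm (Fin (n+1)), F (xi s)
      = (∑ e : Perm (Fin n), F (xi e + 1)) + n * ∑ e : Perm (Fin n), F (xi e) := by
  calc ∑ s : Perm (Fin (n+1)), F (xi s)
      = ∑ x : Fin (n+1) × Perm (Fin n), F (xi (Equiv.Perm.decomposeFin.symm x)) :=
        (Equiv.sum_comp Equiv.Perm.decomposeFin.symm (fun s => F (xi s))).symm
    _ = ∑ p : Fin (n+1), ∑ e : Perm (Fin n), F (xi (Equiv.Perm.decomposeFin.symm (p, e))) :=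
        Fintype.sum_prod_type _
    _ = ∑ p : Fin (n+1), ∑ e : Perm (Fin n), (if p = 0 then F (xi e + 1) else F (xi e)) := by
        refine Finset.sum_congr rfl fun p _ => Finset.sum_congr rfl fun e _ => ?_
        rw [xi_decomposeFin]
        split_ifs <;> simp
    _ = (∑ e : Perm (Fin n), F (xi e + 1)) + n * ∑ e : Perm (Fin n), F (xi e) := by
        rw [Fin.sum_univ_succ]
        simp [Fin.succ_ne_zero, Finset.sum_const, card_univ, mul_comm]

theorem xi_variance (n : ℕ) :
    (∑ s : Perm (Fin n), (xi s : ℝ) ^ 2) / (n.factorial : ℝ)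
      - ((∑ s : Perm (Fin n), (xi s : ℝ)) / (n.factorial : ℝ)) ^ 2
      = ∑ i ∈ Finset.range n, (i : ℝ) / ((i : ℝ) + 1) ^ 2 := by
  induction n with
  | zero =>
    have hx : ∀ s : Perm (Fin 0), xi s = 0 := by
      intro s
      have hs : s = 1 := Subsingleton.elim s 1
      subst hs
      simp [xi]
    simp [hx]
  | succ n ih =>
    set A : ℝ := ∑ e : Perm (Fin n), (xi e : ℝ) with hAdef
    set B : ℝ := ∑ e : Perm (Fin n), (xi e : ℝ) ^ 2 with hBdef
    have hcard : ((Finset.univ : Finset (Perm (Fin n))).card : ℝ) = (n.factorial : ℝ) := by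
      simp [Finset.card_univ, Fintype.card_perm]
    have hA : (∑ s : Perm (Fin (n+1)), (xi s : ℝ)) = (n+1) * A + n.factorial := by
      rw [xi_sum_rec (fun m => (m : ℝ))]
      push_cast
      rw [Finset.sum_add_distrib, Finset.sum_const, nsmul_eq_mul, hcard]
      ring
    have hB : (∑ s : Perm (Fin (n+1)), (xi s : ℝ) ^ 2)
        = (n+1) * B + 2 * A + n.factorial := by
      rw [xi_sum_rec (fun m => (m : ℝ) ^ 2)]
      push_cast
      have : ∑ e : Perm (Fin n), ((xi e : ℝ) + 1) ^ 2
          = ∑ e : Perm (Fin n), ((xi e : ℝ) ^ 2 + 2 * (xi e : ℝ) + 1) :=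
        Finset.sum_congr rfl fun e _ => by ring
      rw [this, Finset.sum_add_distrib, Finset.sum_add_distrib, Finset.sum_const,
        nsmul_eq_mul, hcard, ← Finset.mul_sum]
      ring
    have hfac : ((n+1).factorial : ℝ) = ((n : ℝ) + 1) * (n.factorial : ℝ) := by
      rw [Nat.factorial_succ]; push_cast; ring
    have hf0 : (n.factorial : ℝ) ≠ 0 := Nat.cast_ne_zero.mpr n.factorial_ne_zero
    have hn0 : ((n : ℝ) + 1) ≠ 0 := by positivity
    rw [Finset.sum_range_succ, ← ih, hA, hB, hfac]
    field_simp
    ring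

/-- The variance of the number of cycles of a uniformly random permutation of `{1,…,n}`
equals `∑_{i=1}^n (i-1)/i²`. -/
theorem stmt_9 (n : ℕ) (hn : 1 ≤ n) :
    (∑ s : Equiv.Perm (Fin n),
        ((s.cycleType.card + Fintype.card {x : Fin n // s x = x} : ℕ) : ℝ) ^ 2)
        / (n.factorial : ℝ)
      - ((∑ s : Equiv.Perm (Fin n),
          ((s.cycleType.card + Fintype.card {x : Fin n // s x = x} : ℕ) : ℝ))
          / (n.factorial : ℝ)) ^ 2
      = ∑ i ∈ Finset.range n, (i : ℝ) / ((i : ℝ) + 1) ^ 2 := by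
  have h := xi_variance n
  simpa only [xi, Fintype.card_subtype] using h
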